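/- Let G be a connected finite graph with n vertices, and suppose G can be written as an edge-disjoint union of m complete graphs (cliques) S₁, ..., S_m such that any two cliques share at most one vertex and each vertex of G lies in exactly two cliques. Then the operators h_j = −i ε_j φ_{α(j)} φ_{β(j)} (where vertex j lies in cliques S_{α(j)} and S_{β(j)}, ε_j ∈ {±1}, and φ₁, ..., φ_m are pairwise anticommuting Hermitian involutions) satisfy: h_j and h_k anticommute if j and k are adjacent in G, and commute otherwise. -/
import Mathlib

section aux
variable {m N : ℕ} (φ : Fin m → Matrix (Fin N) (Fin N) ℂ)

lemma sw (hanti : ∀ α β, α ≠ β → φ α * φ β = -(φ β * φ α)) (a c : Fin m) :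
    φ a * φ c = (if a = c then (1:ℂ) else -1) • (φ c * φ a) := by
  by_cases hh : a = c
  · subst hh; simp
  · simp [hh, hanti a c hh]

lemma sw2 (hanti : ∀ α β, α ≠ β → φ α * φ β = -(φ β * φ α)) (a c d : Fin m) :
    φ a * (φ c * φ d) =
      ((if a = c then (1:ℂ) else -1) * (if a = d then (1:ℂ) else -1)) •
        (φ c * φ d * φ a) := by
  calc φ a * (φ c * φ d) = (φ a * φ c) * φ d := by rw [mul_assoc]
    _ = ((if a = c then (1:ℂ) else -1) • (φ c * φ a)) * φ d := by rw [sw φ hanti]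
    _ = (if a = c then (1:ℂ) else -1) • (φ c * (φ a * φ d)) := by
        rw [smul_mul_assoc, mul_assoc]
    _ = (if a = c then (1:ℂ) else -1) • (φ c * ((if a = d then (1:ℂ) else -1) • (φ d * φ a))) := by
        rw [sw φ hanti]
    _ = _ := by
        rw [mul_smul_comm, smul_smul]
        simp only [mul_assoc]

lemma sw4 (hanti : ∀ α β, α ≠ β → φ α * φ β = -(φ β * φ α)) (a b c d : Fin m) :
    (φ a * φ b) * (φ c * φ d) =
      ((if a = c then (1:ℂ) else -1) * (if a = d then (1:ℂ) else -1) *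
        ((if b = c then (1:ℂ) else -1) * (if b = d then (1:ℂ) else -1))) •
        ((φ c * φ d) * (φ a * φ b)) := by
  calc (φ a * φ b) * (φ c * φ d) = φ a * (φ b * (φ c * φ d)) := by rw [mul_assoc]
    _ = φ a * (((if b = c then (1:ℂ) else -1) * (if b = d then (1:ℂ) else -1)) •
          (φ c * φ d * φ b)) := by rw [sw2 φ hanti]
    _ = ((if b = c then (1:ℂ) else -1) * (if b = d then (1:ℂ) else -1)) •
          ((φ a * (φ c * φ d)) * φ b) := by
        rw [mul_smul_comm]; simp only [mul_assoc]
    _ = ((if b = c then (1:ℂ) else -1) * (if b = d then (1:ℂ) else -1)) •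
          ((((if a = c then (1:ℂ) else -1) * (if a = d then (1:ℂ) else -1)) •
            (φ c * φ d * φ a)) * φ b) := by rw [sw2 φ hanti]
    _ = _ := by
        rw [smul_mul_assoc, smul_smul]
        simp only [mul_assoc]
        ring_nf

end aux

theorem stmt17 {ι : Type*} [Fintype ι] (m N : ℕ)
    (G : SimpleGraph ι) (hGconn : G.Connected)
    (S : Fin m → Finset ι) (A B : ι → Fin m)
    (hAB : ∀ j, A j ≠ B j)
    (hmem : ∀ j α, j ∈ S α ↔ (α = A j ∨ α = B j))
    (hint : ∀ α β, α ≠ β → ∀ u v, u ∈ S α → u ∈ S β → v ∈ S α → v ∈ S β → u = v)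
    (hadj : ∀ j k, G.Adj j k ↔ j ≠ k ∧ ∃ α, j ∈ S α ∧ k ∈ S α)
    (φ : Fin m → Matrix (Fin N) (Fin N) ℂ)
    (hherm : ∀ α, (φ α).conjTranspose = φ α)
    (hsq : ∀ α, φ α * φ α = 1)
    (hanti : ∀ α β, α ≠ β → φ α * φ β = -(φ β * φ α))
    (ε : ι → ℂ) (hε : ∀ j, ε j = 1 ∨ ε j = -1)
    (h : ι → Matrix (Fin N) (Fin N) ℂ)
    (hdef : ∀ j, h j = (-(Complex.I) * ε j) • (φ (A j) * φ (B j))) :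
    ∀ j k, (G.Adj j k → h j * h k = -(h k * h j)) ∧
      (j ≠ k → ¬G.Adj j k → h j * h k = h k * h j) := by
  intro j k
  set a := A j with ha
  set b := B j with hb
  set c := A k with hc
  set d := B k with hd
  have key : ∀ s : ℂ,
      ((if a = c then (1:ℂ) else -1) * (if a = d then (1:ℂ) else -1) *
        ((if b = c then (1:ℂ) else -1) * (if b = d then (1:ℂ) else -1))) = s →
      h j * h k = s • (h k * h j) := by
    intro s hs
    rw [hdef j, hdef k, smul_mul_assoc, mul_smul_comm, sw4 φ hanti a b c d, hs,
      smul_smul, smul_smul, smul_mul_assoc, mul_smul_comm, smul_smul, smul_smul]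
    congr 1
    ring
  constructor
  · intro hAdj
    rw [hadj] at hAdj
    obtain ⟨hjk, α, hjα, hkα⟩ := hAdj
    have h1 := (hmem j α).1 hjα
    have h2 := (hmem k α).1 hkα
    have hcd : c ≠ d := hAB k
    have hab : a ≠ b := hAB j
    have n1 : ¬(a = c ∧ b = d) := by
      rintro ⟨e1, e2⟩
      exact hjk (hint a b hab j k ((hmem j a).2 (Or.inl rfl)) ((hmem j b).2 (Or.inr rfl))
        ((hmem k a).2 (Or.inl e1)) ((hmem k b).2 (Or.inr e2)))
    have n2 : ¬(a = d ∧ b = c) := by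
      rintro ⟨e1, e2⟩
      exact hjk (hint a b hab j k ((hmem j a).2 (Or.inl rfl)) ((hmem j b).2 (Or.inr rfl))
        ((hmem k a).2 (Or.inr e1)) ((hmem k b).2 (Or.inl e2)))
    rw [key (-1) ?_, neg_one_smul]
    rcases h1 with h1 | h1 <;> rcases h2 with h2 | h2
    · have e : a = c := h1.symm.trans h2
      have x1 : a ≠ d := fun hh => hcd (e.symm.trans hh)
      have x2 : b ≠ c := fun hh => hab (e.trans hh.symm)
      have x3 : b ≠ d := fun hh => n1 ⟨e, hh⟩
      norm_num [e, x1, x2, x3, hcd, hab, Ne.symm hcd, Ne.symm hab]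
    · have e : a = d := h1.symm.trans h2
      have x1 : a ≠ c := fun hh => hcd (hh.symm.trans e)
      have x2 : b ≠ d := fun hh => hab (e.trans hh.symm)
      have x3 : b ≠ c := fun hh => n2 ⟨e, hh⟩
      norm_num [e, x1, x2, x3, hcd, hab, Ne.symm hcd, Ne.symm hab]
    · have e : b = c := h1.symm.trans h2
      have x1 : b ≠ d := fun hh => hcd (e.symm.trans hh)
      have x2 : a ≠ c := fun hh => hab (hh.trans e.symm)
      have x3 : a ≠ d := fun hh => n2 ⟨hh, e⟩
      norm_num [e, x1, x2, x3, hcd, hab, Ne.symm hcd, Ne.symm hab]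
    · have e : b = d := h1.symm.trans h2
      have x1 : b ≠ c := fun hh => hcd (hh.symm.trans e)
      have x2 : a ≠ d := fun hh => hab (hh.trans e.symm)
      have x3 : a ≠ c := fun hh => n1 ⟨hh, e⟩
      norm_num [e, x1, x2, x3, hcd, hab, Ne.symm hcd, Ne.symm hab]
  · intro hjk hnAdj
    have hnone : ∀ e : Fin m, (e = a ∨ e = b) → (e = c ∨ e = d) → False := by
      intro e he1 he2
      exact hnAdj ((hadj j k).2 ⟨hjk, e, (hmem j e).2 (by tauto), (hmem k e).2 (by tauto)⟩)
    have e1 : a ≠ c := fun hh => hnone a (Or.inl rfl) (Or.inl hh)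
    have e2 : a ≠ d := fun hh => hnone a (Or.inl rfl) (Or.inr hh)
    have e3 : b ≠ c := fun hh => hnone b (Or.inr rfl) (Or.inl hh)
    have e4 : b ≠ d := fun hh => hnone b (Or.inr rfl) (Or.inr hh)
    have := key 1 (by norm_num [e1, e2, e3, e4])
    simpa using this
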